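/- Let (φ̄, ω̄_g, ū) be an equilibrium of the open-loop power-network differential–algebraic system, i.e. ω̄_g = 𝟙ω* for a constant ω* ∈ ℝ, 0 = −D𝟙ω* − E_g∇U(φ̄) + p_g* + ū, and 0 = −E_ℓ∇U(φ̄) + p_ℓ*. Let φ_g, θ_ℓ, ω_g, u be differentiable functions of time on an interval, set φ_ℓ := E_ℓᵀθ_ℓ and φ := φ_g + φ_ℓ, and suppose they satisfy φ̇_g = E_gᵀω_g, M ω̇_g = −Dω_g − E_g∇U(φ) + p_g* + u, and the algebraic constraint 0 = −E_ℓ∇U(φ) + p_ℓ*. Then along this solution the storage function S(φ, ω_g) := ½(ω_g − ω̄_g)ᵀM(ω_g − ω̄_g) + U(φ) − U(φ̄) − (φ − φ̄)ᵀ∇U(φ̄) satisfies, at every time, dS/dt = −(ω_g − ω̄_g)ᵀ D (ω_g − ω̄_g) + (ω_g − ω̄_g)ᵀ(u − ū). In particular the system is output strictly incrementally passive from u to ω_g with respect to this equilibrium. -/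

import Mathlib

open Matrix

lemma mulVec_dot_aux {p q : ℕ} (A : Matrix (Fin p) (Fin q) ℝ) (x : Fin q → ℝ)
    (y : Fin p → ℝ) : (A *ᵥ x) ⬝ᵥ y = x ⬝ᵥ (Aᵀ *ᵥ y) := by
  rw [dotProduct_comm, dotProduct_mulVec, ← mulVec_transpose, dotProduct_comm]

/-- output strict incremental passivity of the open-loop power-network
DAE. Along any solution `(φ_g, θ_ℓ, ω_g, u)` of
`φ̇_g = E_gᵀω_g`, `Mω̇_g = −Dω_g − E_g∇U(φ) + p_g* + u`, `0 = −E_ℓ∇U(φ) + p_ℓ*`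
(with `φ = φ_g + E_ℓᵀθ_ℓ`), and for any equilibrium `(φ̄, 𝟙ω*, ū)`, the storage
`S = ½(ω_g − ω̄_g)ᵀM(ω_g − ω̄_g) + U(φ) − U(φ̄) − (φ − φ̄)ᵀ∇U(φ̄)` satisfies
`dS/dt = −(ω_g − ω̄_g)ᵀD(ω_g − ω̄_g) + (ω_g − ω̄_g)ᵀ(u − ū)`. -/
theorem open_loop_dae_output_strict_incremental_passivity
    {n m ng nl : ℕ}
    (Rφ : Matrix (Fin n) (Fin m) ℝ) (γ : Fin m → ℝ)
    (Eg : Matrix (Fin ng) (Fin n) ℝ) (El : Matrix (Fin nl) (Fin n) ℝ)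
    (M D : Fin ng → ℝ) (pgs : Fin ng → ℝ) (pls : Fin nl → ℝ)
    (hγ : ∀ k, 0 < γ k) (hM : ∀ i, 0 < M i) (hD : ∀ i, 0 < D i)
    (hE1 : ∀ j : Fin n, (∑ i, Eg i j) + (∑ i, El i j) = 0)
    -- the gradient  ∇U(φ) = R_φ Γ sin(R_φᵀ φ)
    (gradU : (Fin n → ℝ) → (Fin n → ℝ))
    (hgradU : ∀ φ : Fin n → ℝ, gradU φ = Rφ *ᵥ fun kk => γ kk * Real.sin ((Rφᵀ *ᵥ φ) kk))
    -- equilibrium (φ̄, 𝟙ω*, ū)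
    (ωs : ℝ) (φe : Fin n → ℝ) (ue : Fin ng → ℝ)
    (heq1 : ∀ i, 0 = -(D i * ωs) - (Eg *ᵥ gradU φe) i + pgs i + ue i)
    (heq2 : ∀ j, 0 = -(El *ᵥ gradU φe) j + pls j)
    -- a solution on an interval I
    (I : Set ℝ)
    (φg : ℝ → Fin n → ℝ) (θl : ℝ → Fin nl → ℝ) (ωg : ℝ → Fin ng → ℝ)
    (u : ℝ → Fin ng → ℝ) (θl' : ℝ → Fin nl → ℝ)
    (hφg : ∀ t ∈ I, HasDerivAt φg (Egᵀ *ᵥ ωg t) t)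
    (hθl : ∀ t ∈ I, HasDerivAt θl (θl' t) t)
    (hu : ∀ t ∈ I, DifferentiableAt ℝ u t)
    (hωg : ∀ t ∈ I, HasDerivAt ωg
      (fun i => (-(D i * ωg t i) - (Eg *ᵥ gradU (φg t + Elᵀ *ᵥ θl t)) i
          + pgs i + u t i) / M i) t)
    (halg : ∀ t ∈ I, El *ᵥ gradU (φg t + Elᵀ *ᵥ θl t) = pls) :
    ∀ t ∈ I,
      HasDerivAt
        (fun s =>
          (1 / 2) * ∑ i, M i * (ωg s i - ωs) ^ 2
            + (-∑ kk, γ kk * Real.cos ((Rφᵀ *ᵥ (φg s + Elᵀ *ᵥ θl s)) kk))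
            - (-∑ kk, γ kk * Real.cos ((Rφᵀ *ᵥ φe) kk))
            - ((φg s + Elᵀ *ᵥ θl s) - φe) ⬝ᵥ gradU φe)
        (-(∑ i, D i * (ωg t i - ωs) ^ 2) + ∑ i, (ωg t i - ωs) * (u t i - ue i)) t := by
  intro t ht
  set φt : Fin n → ℝ := φg t + Elᵀ *ᵥ θl t with hφt
  set g : Fin n → ℝ := gradU φt with hg
  set ge : Fin n → ℝ := gradU φe with hge
  set w : Fin ng → ℝ := ωg t with hw
  set ω' : Fin ng → ℝ := fun i => (-(D i * w i) - (Eg *ᵥ g) i + pgs i + u t i) / M i with hω'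
  set Φ' : Fin n → ℝ := Egᵀ *ᵥ w + Elᵀ *ᵥ θl' t with hΦ'
  have hωi : ∀ i, HasDerivAt (fun s => ωg s i) (ω' i) t :=
    fun i => hasDerivAt_pi.mp (hωg t ht) i
  have hφgj : ∀ j, HasDerivAt (fun s => φg s j) ((Egᵀ *ᵥ w) j) t :=
    fun j => hasDerivAt_pi.mp (hφg t ht) j
  have hθll : ∀ l, HasDerivAt (fun s => θl s l) (θl' t l) t :=
    fun l => hasDerivAt_pi.mp (hθl t ht) l
  have hφj : ∀ j, HasDerivAt (fun s => (φg s + Elᵀ *ᵥ θl s) j) (Φ' j) t := by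
    intro j
    have h2 : HasDerivAt (fun s => (Elᵀ *ᵥ θl s) j) ((Elᵀ *ᵥ θl' t) j) t := by
      simp only [mulVec, dotProduct]
      exact HasDerivAt.fun_sum (fun l _ => (hθll l).const_mul (Elᵀ j l))
    simpa only [Pi.add_apply, hΦ'] using (hφgj j).fun_add h2
  -- term A
  have hA : HasDerivAt (fun s => (1/2 : ℝ) * ∑ i, M i * (ωg s i - ωs) ^ 2)
      (∑ i, (w i - ωs) * (M i * ω' i)) t := by
    have h1 := HasDerivAt.const_mul (1/2 : ℝ)
      (HasDerivAt.fun_sum (u := Finset.univ)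
        (fun i _ => (((hωi i).sub_const ωs).fun_pow 2).const_mul (M i)))
    refine h1.congr_deriv ?_
    rw [Finset.mul_sum]
    refine Finset.sum_congr rfl fun i _ => ?_
    push_cast
    ring
  -- derivative of the angle map
  have hRk : ∀ kk, HasDerivAt (fun s => (Rφᵀ *ᵥ (φg s + Elᵀ *ᵥ θl s)) kk)
      ((Rφᵀ *ᵥ Φ') kk) t := by
    intro kk
    simp only [mulVec, dotProduct]
    exact HasDerivAt.fun_sum fun j _ => ((hφj j).const_mul (Rφᵀ kk j))
  -- term B
  have hB : HasDerivAt (fun s => -∑ kk, γ kk * Real.cos ((Rφᵀ *ᵥ (φg s + Elᵀ *ᵥ θl s)) kk))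
      (∑ kk, γ kk * Real.sin ((Rφᵀ *ᵥ φt) kk) * (Rφᵀ *ᵥ Φ') kk) t := by
    have h1 : HasDerivAt (fun s => ∑ kk, γ kk * Real.cos ((Rφᵀ *ᵥ (φg s + Elᵀ *ᵥ θl s)) kk))
        (∑ kk, γ kk * (-Real.sin ((Rφᵀ *ᵥ φt) kk) * (Rφᵀ *ᵥ Φ') kk)) t :=
      HasDerivAt.fun_sum fun kk _ => ((hRk kk).cos).const_mul (γ kk)
    refine h1.fun_neg.congr_deriv ?_
    rw [← Finset.sum_neg_distrib]
    exact Finset.sum_congr rfl fun kk _ => by ring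
  -- term D
  have hDterm : HasDerivAt (fun s => ((φg s + Elᵀ *ᵥ θl s) - φe) ⬝ᵥ ge) (Φ' ⬝ᵥ ge) t := by
    simp only [dotProduct, Pi.sub_apply]
    exact HasDerivAt.fun_sum fun j _ => ((hφj j).sub_const (φe j)).mul_const (ge j)
  have hS := ((hA.fun_add hB).sub_const (-∑ kk, γ kk * Real.cos ((Rφᵀ *ᵥ φe) kk))).fun_sub hDterm
  -- facts for the algebra
  have hMω : ∀ i, M i * ω' i = -(D i * w i) - (Eg *ᵥ g) i + pgs i + u t i := by
    intro i
    rw [hω', mul_comm]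
    exact div_mul_cancel₀ _ (hM i).ne'
  have hElg : El *ᵥ g = pls := by rw [hg, hφt]; exact halg t ht
  have hElge : El *ᵥ ge = pls := by
    funext j
    have := heq2 j
    rw [hge]
    linarith [heq2 j]
  have hones : ∀ x : Fin n → ℝ, ∑ i, (Eg *ᵥ x) i = -∑ j, (El *ᵥ x) j := by
    intro x
    simp only [mulVec, dotProduct]
    rw [Finset.sum_comm, Finset.sum_comm (f := fun l j => El l j * x j)]
    rw [← Finset.sum_neg_distrib]
    refine Finset.sum_congr rfl fun j _ => ?_
    rw [← Finset.sum_mul, ← Finset.sum_mul]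
    linear_combination x j * hE1 j
  have hEgsum : ∑ i, (Eg *ᵥ g) i = ∑ i, (Eg *ᵥ ge) i := by
    rw [hones g, hones ge, hElg, hElge]
  have hgdot : (∑ kk, γ kk * Real.sin ((Rφᵀ *ᵥ φt) kk) * (Rφᵀ *ᵥ Φ') kk)
      = w ⬝ᵥ (Eg *ᵥ g) + θl' t ⬝ᵥ pls := by
    have h1 : g ⬝ᵥ Φ' = ∑ kk, γ kk * Real.sin ((Rφᵀ *ᵥ φt) kk) * (Rφᵀ *ᵥ Φ') kk := by
      rw [hg, hgradU, mulVec_dot_aux]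
      simp only [dotProduct]
    rw [← h1, hΦ', dotProduct_add, dotProduct_comm g (Egᵀ *ᵥ w), mulVec_dot_aux,
      transpose_transpose, dotProduct_comm g (Elᵀ *ᵥ θl' t), mulVec_dot_aux,
      transpose_transpose, hElg]
  have hgedot : Φ' ⬝ᵥ ge = w ⬝ᵥ (Eg *ᵥ ge) + θl' t ⬝ᵥ pls := by
    rw [hΦ', add_dotProduct, mulVec_dot_aux, transpose_transpose,
      mulVec_dot_aux, transpose_transpose, hElge]
  have key : (∑ i, (w i - ωs) * (M i * ω' i))
        + (∑ kk, γ kk * Real.sin ((Rφᵀ *ᵥ φt) kk) * (Rφᵀ *ᵥ Φ') kk)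
        - Φ' ⬝ᵥ ge
      = -(∑ i, D i * (w i - ωs) ^ 2) + ∑ i, (w i - ωs) * (u t i - ue i) := by
    rw [hgdot, hgedot]
    simp only [dotProduct]
    have step1 : (∑ i, (w i - ωs) * (M i * ω' i))
        + (∑ i, w i * (Eg *ᵥ g) i + (∑ l, θl' t l * pls l))
        - (∑ i, w i * (Eg *ᵥ ge) i + (∑ l, θl' t l * pls l))
        = ∑ i, ((w i - ωs) * (M i * ω' i) + w i * (Eg *ᵥ g) i - w i * (Eg *ᵥ ge) i) := by
      rw [Finset.sum_sub_distrib, Finset.sum_add_distrib]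
      ring
    rw [step1]
    have step2 : ∀ i ∈ (Finset.univ : Finset (Fin ng)),
        (w i - ωs) * (M i * ω' i) + w i * (Eg *ᵥ g) i - w i * (Eg *ᵥ ge) i
        = (-(D i * (w i - ωs) ^ 2) + (w i - ωs) * (u t i - ue i))
          + (ωs * (Eg *ᵥ g) i - ωs * (Eg *ᵥ ge) i) := by
      intro i _
      rw [hMω i]
      linear_combination (-(w i - ωs)) * heq1 i
    rw [Finset.sum_congr rfl step2, Finset.sum_add_distrib, Finset.sum_sub_distrib,
      ← Finset.mul_sum, ← Finset.mul_sum, hEgsum, Finset.sum_add_distrib,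
      Finset.sum_neg_distrib]
    ring
  exact key ▸ hS
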